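/- Let x ∈ R^{d₀} be nonzero, W₁ ∈ R^{d₁×d₀}, w₂ ∈ R^{d₁}. If the parameters of a one-hidden-layer sign network f_{(V₁,v₂)}(x) = sgn(v₂ · sgn(V₁ x)) are drawn from independent Gaussians V₁ ~ N(W₁, I) (rows independent) and v₂ ~ N(w₂, I), then E[f] = ∑_{s ∈ {-1,1}^{d₁}} Erf(w₂·s / √(2 d₁)) · ∏_{i=1}^{d₁} (1/2 + (s_i/2) Erf(w₁ⁱ·x / (√2 ‖x‖))), where w₁ⁱ is the i-th row of W₁. -/

import Mathlib

open MeasureTheory ProbabilityTheory Real Set NNReal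

noncomputable def sgn (a : ℝ) : ℝ := if 0 < a then 1 else -1

noncomputable def Erf (z : ℝ) : ℝ :=
  (2 / Real.sqrt Real.pi) * ∫ t in (0:ℝ)..z, Real.exp (-t ^ 2)

lemma measurable_sgn : Measurable sgn := by
  unfold sgn
  exact Measurable.ite (measurableSet_lt measurable_const measurable_id) measurable_const
    measurable_const

lemma integrable_expsq : Integrable (fun t : ℝ => Real.exp (-t ^ 2)) := by
  simpa using integrable_exp_neg_mul_sq (one_pos)

lemma integral_comp_sub_right_Ioi (f : ℝ → ℝ) (c a : ℝ) :
    ∫ x in Ioi c, f (x - a) = ∫ x in Ioi (c - a), f x := by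
  have A : MeasurableEmbedding fun x : ℝ => x + (-a) :=
    (Homeomorph.addRight (-a)).isClosedEmbedding.measurableEmbedding
  have B := MeasurableEmbedding.setIntegral_map (μ := volume) A f (Ioi (c - a))
  rw [map_add_right_eq_self (volume : Measure ℝ) (-a)] at B
  have hp : (fun x : ℝ => x + (-a)) ⁻¹' (Ioi (c - a)) = Ioi c := by
    ext y; simp [sub_lt_iff_lt_add, ← sub_eq_add_neg, sub_lt_sub_iff_right]
  rw [hp] at B
  simp only [← sub_eq_add_neg] at B
  exact B.symm

lemma expsq_Iic : ∫ t in Iic (0:ℝ), Real.exp (-t ^ 2) = Real.sqrt Real.pi / 2 := by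
  have h := integral_comp_neg_Iic (0:ℝ) (fun t => Real.exp (-t ^ 2))
  have h2 : ∀ x : ℝ, Real.exp (-(-x) ^ 2) = Real.exp (-x ^ 2) := by intro x; ring_nf
  simp only [h2, neg_zero] at h
  rw [h]
  simpa using integral_gaussian_Ioi 1

lemma expsq_total : ∫ t : ℝ, Real.exp (-t ^ 2) = Real.sqrt Real.pi := by
  simpa using integral_gaussian 1

lemma expsq_Ioi_shift (r : ℝ) :
    ∫ t in Ioi (0:ℝ), Real.exp (-(t - r) ^ 2)
      = Real.sqrt Real.pi / 2 + ∫ t in (0:ℝ)..r, Real.exp (-t ^ 2) := by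
  rw [integral_comp_sub_right_Ioi (fun t => Real.exp (-t ^ 2)) 0 r, zero_sub]
  have h1 : (∫ t in Iic (-r), Real.exp (-t ^ 2)) + ∫ t in Ioi (-r), Real.exp (-t ^ 2)
      = ∫ t : ℝ, Real.exp (-t ^ 2) :=
    intervalIntegral.integral_Iic_add_Ioi integrable_expsq.integrableOn
      integrable_expsq.integrableOn
  have h2 : (∫ t in Iic (0:ℝ), Real.exp (-t ^ 2)) - ∫ t in Iic (-r), Real.exp (-t ^ 2)
      = ∫ t in (-r)..(0:ℝ), Real.exp (-t ^ 2) :=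
    intervalIntegral.integral_Iic_sub_Iic integrable_expsq.integrableOn
      integrable_expsq.integrableOn
  have h3 : ∫ t in (-r)..(0:ℝ), Real.exp (-t ^ 2) = ∫ t in (0:ℝ)..r, Real.exp (-t ^ 2) := by
    have h4 := intervalIntegral.integral_comp_neg (a := (0:ℝ)) (b := r)
      (f := fun t => Real.exp (-t ^ 2))
    have h2' : ∀ x : ℝ, Real.exp (-(-x) ^ 2) = Real.exp (-x ^ 2) := by intro x; ring_nf
    simp only [h2', neg_zero] at h4
    rw [← h4]
  rw [expsq_total] at h1
  rw [expsq_Iic] at h2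
  linarith

lemma gaussian_cdf_Ioi (μ : ℝ) (v : ℝ≥0) (hv : v ≠ 0) :
    ∫ y in Ioi (0:ℝ), gaussianPDFReal μ v y
      = 1 / 2 + Erf (μ / (Real.sqrt 2 * Real.sqrt v)) / 2 := by
  have hv' : (0:ℝ) < (v:ℝ) := lt_of_le_of_ne v.coe_nonneg (by exact_mod_cast (Ne.symm hv))
  set c : ℝ := Real.sqrt (2 * v) with hc
  have hcpos : 0 < c := Real.sqrt_pos.mpr (by positivity)
  have hcsq : c ^ 2 = 2 * v := Real.sq_sqrt (by positivity)
  have key := integral_comp_mul_left_Ioi (gaussianPDFReal μ v) 0 hcpos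
  simp only [mul_zero, smul_eq_mul] at key
  -- key : ∫ x in Ioi 0, pdf (c * x) = c⁻¹ * ∫ x in Ioi 0, pdf x
  have hpdf : ∀ x : ℝ, gaussianPDFReal μ v (c * x)
      = (Real.sqrt (2 * π * v))⁻¹ * Real.exp (-(x - μ / c) ^ 2) := by
    intro x
    unfold gaussianPDFReal
    congr 1
    congr 1
    have : (c * x - μ) ^ 2 = c ^ 2 * (x - μ / c) ^ 2 := by
      field_simp
    rw [this, hcsq]
    field_simp
  have h2 : ∫ x in Ioi (0:ℝ), gaussianPDFReal μ v (c * x)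
      = (Real.sqrt (2 * π * v))⁻¹ * (Real.sqrt π / 2 + ∫ t in (0:ℝ)..(μ / c), Real.exp (-t ^ 2)) := by
    simp only [hpdf]
    rw [integral_const_mul, expsq_Ioi_shift (μ / c)]
  have h3 : ∫ x in Ioi (0:ℝ), gaussianPDFReal μ v x
      = c * ((Real.sqrt (2 * π * v))⁻¹ * (Real.sqrt π / 2 + ∫ t in (0:ℝ)..(μ / c), Real.exp (-t ^ 2))) := by
    rw [← h2, key, ← mul_assoc, mul_inv_cancel₀ hcpos.ne', one_mul]
  rw [h3]
  have hsplit : Real.sqrt (2 * π * v) = Real.sqrt π * c := by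
    rw [hc, ← Real.sqrt_mul (le_of_lt Real.pi_pos)]
    congr 1
    ring
  rw [hsplit, mul_inv]
  have hπ : (0:ℝ) < Real.sqrt π := Real.sqrt_pos.mpr Real.pi_pos
  have hμc : μ / c = μ / (Real.sqrt 2 * Real.sqrt v) := by
    rw [hc, Real.sqrt_mul (by norm_num)]
  rw [Erf, hμc]
  field_simp

lemma gaussian_cdf_Iic (μ : ℝ) (v : ℝ≥0) (hv : v ≠ 0) :
    ∫ y in Iic (0:ℝ), gaussianPDFReal μ v y
      = 1 / 2 - Erf (μ / (Real.sqrt 2 * Real.sqrt v)) / 2 := by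
  have h1 : (∫ y in Iic (0:ℝ), gaussianPDFReal μ v y) + ∫ y in Ioi (0:ℝ), gaussianPDFReal μ v y
      = ∫ y : ℝ, gaussianPDFReal μ v y :=
    intervalIntegral.integral_Iic_add_Ioi (integrable_gaussianPDFReal μ v).integrableOn
      (integrable_gaussianPDFReal μ v).integrableOn
  rw [integral_gaussianPDFReal_eq_one μ hv, gaussian_cdf_Ioi μ v hv] at h1
  linarith

lemma ind_eq_indicator (s : Set ℝ) [DecidablePred (· ∈ s)] :
    (fun y : ℝ => if y ∈ s then (1:ℝ) else 0) = s.indicator 1 := by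
  ext y; by_cases h : y ∈ s <;> simp [h]

lemma gaussianReal_integral_indicator (μ : ℝ) (v : ℝ≥0) (hv : v ≠ 0) {s : Set ℝ}
    (hs : MeasurableSet s) :
    ∫ y, s.indicator (1 : ℝ → ℝ) y ∂gaussianReal μ v = ∫ y in s, gaussianPDFReal μ v y := by
  rw [MeasureTheory.integral_indicator_one hs, measureReal_def, gaussianReal_apply_eq_integral μ hv s,
    ENNReal.toReal_ofReal]
  exact setIntegral_nonneg hs fun y _ => gaussianPDFReal_nonneg μ v y

lemma sgn_eq_one_iff (y : ℝ) : sgn y = 1 ↔ 0 < y := by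
  unfold sgn; by_cases h : 0 < y <;> simp [h]
  norm_num

lemma sgn_eq_neg_one_iff (y : ℝ) : sgn y = -1 ↔ ¬ 0 < y := by
  unfold sgn; by_cases h : 0 < y <;> simp [h]
  norm_num

lemma integral_if_sgn_pos (μ : ℝ) (v : ℝ≥0) (hv : v ≠ 0) :
    ∫ y, (if sgn y = 1 then (1:ℝ) else 0) ∂gaussianReal μ v
      = 1 / 2 + Erf (μ / (Real.sqrt 2 * Real.sqrt v)) / 2 := by
  have he : (fun y : ℝ => if sgn y = 1 then (1:ℝ) else 0)
      = (Ioi (0:ℝ)).indicator (1 : ℝ → ℝ) := by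
    ext y
    by_cases h : 0 < y
    · simp [Set.indicator_of_mem, h, (sgn_eq_one_iff y).2 h]
    · have : ¬ (sgn y = 1) := fun hc => h ((sgn_eq_one_iff y).1 hc)
      simp [this, Set.indicator_of_notMem, h]
  rw [he, gaussianReal_integral_indicator μ v hv measurableSet_Ioi, gaussian_cdf_Ioi μ v hv]

lemma integral_if_sgn_neg (μ : ℝ) (v : ℝ≥0) (hv : v ≠ 0) :
    ∫ y, (if sgn y = -1 then (1:ℝ) else 0) ∂gaussianReal μ v
      = 1 / 2 - Erf (μ / (Real.sqrt 2 * Real.sqrt v)) / 2 := by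
  have he : (fun y : ℝ => if sgn y = -1 then (1:ℝ) else 0)
      = (Iic (0:ℝ)).indicator (1 : ℝ → ℝ) := by
    ext y
    by_cases h : 0 < y
    · have : ¬ (sgn y = -1) := fun hc => ((sgn_eq_neg_one_iff y).1 hc) h
      simp [this, Set.indicator_of_notMem, not_le.mpr h]
    · simp [Set.indicator_of_mem, not_lt.mp h, (sgn_eq_neg_one_iff y).2 h]
  rw [he, gaussianReal_integral_indicator μ v hv measurableSet_Iic, gaussian_cdf_Iic μ v hv]

lemma integral_if_sgn (μ : ℝ) (v : ℝ≥0) (hv : v ≠ 0) (s : ℝ) (hs : s = 1 ∨ s = -1) :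
    ∫ y, (if sgn y = s then (1:ℝ) else 0) ∂gaussianReal μ v
      = 1 / 2 + s / 2 * Erf (μ / (Real.sqrt 2 * Real.sqrt v)) := by
  rcases hs with h | h <;> subst h
  · rw [integral_if_sgn_pos μ v hv]; ring
  · rw [integral_if_sgn_neg μ v hv]; ring

lemma integral_sgn (μ : ℝ) (v : ℝ≥0) (hv : v ≠ 0) :
    ∫ y, sgn y ∂gaussianReal μ v = Erf (μ / (Real.sqrt 2 * Real.sqrt v)) := by
  have hpt : ∀ y : ℝ, sgn y
      = (if sgn y = 1 then (1:ℝ) else 0) - (if sgn y = -1 then (1:ℝ) else 0) := by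
    intro y
    unfold sgn
    by_cases h : 0 < y <;> simp [h] <;> norm_num
  have hint1 : Integrable (fun y : ℝ => if sgn y = 1 then (1:ℝ) else 0) (gaussianReal μ v) := by
    have : (fun y : ℝ => if sgn y = 1 then (1:ℝ) else 0)
        = (Ioi (0:ℝ)).indicator (1 : ℝ → ℝ) := by
      ext y
      by_cases h : 0 < y
      · simp [Set.indicator_of_mem, h, (sgn_eq_one_iff y).2 h]
      · have : ¬ (sgn y = 1) := fun hc => h ((sgn_eq_one_iff y).1 hc)
        simp [this, Set.indicator_of_notMem, h]
    rw [this]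
    exact (integrable_const 1).indicator measurableSet_Ioi
  have hint2 : Integrable (fun y : ℝ => if sgn y = -1 then (1:ℝ) else 0) (gaussianReal μ v) := by
    have : (fun y : ℝ => if sgn y = -1 then (1:ℝ) else 0)
        = (Iic (0:ℝ)).indicator (1 : ℝ → ℝ) := by
      ext y
      by_cases h : 0 < y
      · have : ¬ (sgn y = -1) := fun hc => ((sgn_eq_neg_one_iff y).1 hc) h
        simp [this, Set.indicator_of_notMem, not_le.mpr h]
      · simp [Set.indicator_of_mem, not_lt.mp h, (sgn_eq_neg_one_iff y).2 h]
    rw [this]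
    exact (integrable_const 1).indicator measurableSet_Iic
  calc ∫ y, sgn y ∂gaussianReal μ v
      = ∫ y, ((if sgn y = 1 then (1:ℝ) else 0) - (if sgn y = -1 then (1:ℝ) else 0))
          ∂gaussianReal μ v := by
        congr 1; ext y; exact hpt y
    _ = (∫ y, (if sgn y = 1 then (1:ℝ) else 0) ∂gaussianReal μ v)
        - ∫ y, (if sgn y = -1 then (1:ℝ) else 0) ∂gaussianReal μ v :=
        integral_sub hint1 hint2
    _ = Erf (μ / (Real.sqrt 2 * Real.sqrt v)) := by
        rw [integral_if_sgn_pos μ v hv, integral_if_sgn_neg μ v hv]; ring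

lemma nnreal_pos_of_ne_zero {v : ℝ≥0} (hv : v ≠ 0) : (0:ℝ) < v :=
  lt_of_le_of_ne v.coe_nonneg (by exact_mod_cast (Ne.symm hv))

lemma gaussianPDFReal_conv (μ₁ μ₂ : ℝ) (v₁ v₂ : ℝ≥0) (h₁ : v₁ ≠ 0) (h₂ : v₂ ≠ 0) (z y : ℝ) :
    gaussianPDFReal μ₁ v₁ y * gaussianPDFReal μ₂ v₂ (z - y)
      = gaussianPDFReal (μ₁ + μ₂) (v₁ + v₂) z *
        gaussianPDFReal ((μ₁ * v₂ + (z - μ₂) * v₁) / (v₁ + v₂)) (v₁ * v₂ / (v₁ + v₂)) y := by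
  have ha : (0:ℝ) < v₁ := nnreal_pos_of_ne_zero h₁
  have hb : (0:ℝ) < v₂ := nnreal_pos_of_ne_zero h₂
  have hab : (0:ℝ) < (v₁:ℝ) + v₂ := by linarith
  unfold gaussianPDFReal
  push_cast
  rw [mul_mul_mul_comm, mul_mul_mul_comm ((Real.sqrt (2 * π * ((v₁:ℝ) + v₂)))⁻¹), ← mul_inv,
    ← mul_inv, ← Real.exp_add, ← Real.exp_add]
  congr 1
  · congr 1
    rw [← Real.sqrt_mul (by positivity), ← Real.sqrt_mul (by positivity)]
    congr 1
    field_simp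
  · congr 1
    field_simp
    ring

lemma gaussianPDFReal_shift (μ₂ y z : ℝ) (v : ℝ≥0) :
    gaussianPDFReal (μ₂ + y) v z = gaussianPDFReal μ₂ v (z - y) := by
  unfold gaussianPDFReal
  congr 2
  ring

lemma gaussianReal_conv (μ₁ μ₂ : ℝ) (v₁ v₂ : ℝ≥0) :
    Measure.map (fun p : ℝ × ℝ => p.1 + p.2)
        ((gaussianReal μ₁ v₁).prod (gaussianReal μ₂ v₂))
      = gaussianReal (μ₁ + μ₂) (v₁ + v₂) := by
  by_cases h₁ : v₁ = 0
  · subst h₁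
    rw [gaussianReal_zero_var, Measure.dirac_prod,
      Measure.map_map measurable_add measurable_prodMk_left]
    have : ((fun p : ℝ × ℝ => p.1 + p.2) ∘ Prod.mk μ₁) = (μ₁ + ·) := rfl
    rw [this, gaussianReal_map_const_add, zero_add, add_comm]
  by_cases h₂ : v₂ = 0
  · subst h₂
    rw [gaussianReal_zero_var, Measure.prod_dirac,
      Measure.map_map measurable_add measurable_prodMk_right]
    have : ((fun p : ℝ × ℝ => p.1 + p.2) ∘ (fun x => (x, μ₂))) = (· + μ₂) := rfl
    rw [this, gaussianReal_map_add_const, add_zero]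
  have h₁₂ : v₁ + v₂ ≠ 0 := by
    intro h
    rw [add_eq_zero] at h
    exact h₁ h.1
  have hv' : v₁ * v₂ / (v₁ + v₂) ≠ 0 := by
    rw [div_ne_zero_iff]
    exact ⟨mul_ne_zero h₁ h₂, h₁₂⟩
  ext s hs
  rw [Measure.map_apply measurable_add hs, Measure.prod_apply (measurable_add hs)]
  have step1 : ∀ y : ℝ,
      (gaussianReal μ₂ v₂) (Prod.mk y ⁻¹' ((fun p : ℝ × ℝ => p.1 + p.2) ⁻¹' s))
        = ∫⁻ z in s, ENNReal.ofReal (gaussianPDFReal μ₂ v₂ (z - y)) := by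
    intro y
    have hpre : Prod.mk y ⁻¹' ((fun p : ℝ × ℝ => p.1 + p.2) ⁻¹' s) = (y + ·) ⁻¹' s := rfl
    rw [hpre, ← Measure.map_apply (measurable_const_add y) hs, gaussianReal_map_const_add,
      gaussianReal_apply _ h₂ s]
    have hfe : (gaussianPDF (μ₂ + y) v₂) = fun z => ENNReal.ofReal (gaussianPDFReal μ₂ v₂ (z - y)) := by
      funext z
      rw [gaussianPDF, gaussianPDFReal_shift]
    rw [hfe]
  simp_rw [step1]
  rw [gaussianReal_of_var_ne_zero μ₁ h₁]
  rw [lintegral_withDensity_eq_lintegral_mul _ (measurable_gaussianPDF μ₁ v₁)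
    (by
      apply Measurable.lintegral_prod_right (ν := volume.restrict s)
      exact ((measurable_gaussianPDFReal μ₂ v₂).comp
        ((measurable_snd.sub measurable_fst))).ennreal_ofReal)]
  simp only [Pi.mul_apply]
  have step2 : ∀ y : ℝ,
      gaussianPDF μ₁ v₁ y * ∫⁻ z in s, ENNReal.ofReal (gaussianPDFReal μ₂ v₂ (z - y))
        = ∫⁻ z in s, ENNReal.ofReal (gaussianPDFReal μ₁ v₁ y * gaussianPDFReal μ₂ v₂ (z - y)) := by
    intro y
    have hm : Measurable fun z : ℝ => ENNReal.ofReal (gaussianPDFReal μ₂ v₂ (z - y)) :=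
      ((measurable_gaussianPDFReal μ₂ v₂).comp (measurable_id.sub measurable_const)).ennreal_ofReal
    rw [← lintegral_const_mul (r := gaussianPDF μ₁ v₁ y)
      (f := fun z => ENNReal.ofReal (gaussianPDFReal μ₂ v₂ (z - y))) hm]
    have hfe : ∀ z : ℝ, gaussianPDF μ₁ v₁ y * ENNReal.ofReal (gaussianPDFReal μ₂ v₂ (z - y))
        = ENNReal.ofReal (gaussianPDFReal μ₁ v₁ y * gaussianPDFReal μ₂ v₂ (z - y)) := by
      intro z
      rw [gaussianPDF, ← ENNReal.ofReal_mul (gaussianPDFReal_nonneg μ₁ v₁ y)]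
    simp_rw [hfe]
  simp_rw [step2]
  rw [lintegral_lintegral_swap]
  swap
  · exact (((measurable_gaussianPDFReal μ₁ v₁).comp measurable_fst).mul
      ((measurable_gaussianPDFReal μ₂ v₂).comp
        (measurable_snd.sub measurable_fst))).ennreal_ofReal.aemeasurable
  have step3 : ∀ z : ℝ,
      ∫⁻ y, ENNReal.ofReal (gaussianPDFReal μ₁ v₁ y * gaussianPDFReal μ₂ v₂ (z - y))
        = gaussianPDF (μ₁ + μ₂) (v₁ + v₂) z := by
    intro z
    have : ∀ y : ℝ, ENNReal.ofReal (gaussianPDFReal μ₁ v₁ y * gaussianPDFReal μ₂ v₂ (z - y))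
        = gaussianPDF (μ₁ + μ₂) (v₁ + v₂) z *
          gaussianPDF ((μ₁ * v₂ + (z - μ₂) * v₁) / (v₁ + v₂)) (v₁ * v₂ / (v₁ + v₂)) y := by
      intro y
      rw [gaussianPDFReal_conv μ₁ μ₂ v₁ v₂ h₁ h₂ z y, gaussianPDF, gaussianPDF,
        ENNReal.ofReal_mul (gaussianPDFReal_nonneg _ _ _)]
    simp_rw [this]
    rw [lintegral_const_mul _ (measurable_gaussianPDF _ _), lintegral_gaussianPDF_eq_one _ hv',
      mul_one]
  simp_rw [step3]
  rw [gaussianReal_apply _ h₁₂ s]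

lemma map_lin : ∀ (n : ℕ) (x w : Fin n → ℝ),
    Measure.map (fun v : Fin n → ℝ => ∑ j, v j * x j)
        (Measure.pi fun j => gaussianReal (w j) 1)
      = gaussianReal (∑ j, w j * x j) (∑ j, Real.nnabs (x j) ^ 2) := by
  intro n
  induction n with
  | zero =>
      intro x w
      simp only [Finset.univ_eq_empty, Finset.sum_empty]
      rw [show (fun v : Fin 0 → ℝ => (0:ℝ)) = fun _ => (0:ℝ) from rfl, Measure.map_const,
        measure_univ, one_smul, gaussianReal_zero_var]
  | succ n ih =>
      intro x w
      have hmp := (measurePreserving_piFinSuccAbove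
        (fun i : Fin (n + 1) => gaussianReal (w i) 1) 0).symm
      have hP : Measure.pi (fun j : Fin (n + 1) => gaussianReal (w j) 1)
          = Measure.map (MeasurableEquiv.piFinSuccAbove (fun _ : Fin (n + 1) => ℝ) 0).symm
            ((gaussianReal (w 0) 1).prod
              (Measure.pi fun j : Fin n => gaussianReal (w ((0 : Fin (n + 1)).succAbove j)) 1)) :=
        hmp.map_eq.symm
      have hfmeas : Measurable (fun v : Fin (n + 1) → ℝ => ∑ j, v j * x j) :=
        Finset.measurable_sum _ fun j _ => (measurable_pi_apply j).mul_const _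
      rw [hP, Measure.map_map hfmeas (MeasurableEquiv.measurable _)]
      have hfe : ((fun v : Fin (n + 1) → ℝ => ∑ j, v j * x j)
            ∘ (MeasurableEquiv.piFinSuccAbove (fun _ : Fin (n + 1) => ℝ) 0).symm)
          = (fun p : ℝ × ℝ => p.1 + p.2) ∘
              Prod.map (fun y : ℝ => y * x 0)
                (fun u : Fin n → ℝ => ∑ j, u j * x (Fin.succ j)) := by
        funext p
        simp only [Function.comp_apply, MeasurableEquiv.piFinSuccAbove_symm_apply,
          Fin.insertNthEquiv, Equiv.coe_fn_mk, Fin.insertNth_zero, Prod.map_apply]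
        rw [Fin.sum_univ_succ]
        simp [Fin.cons_zero, Fin.cons_succ]
      have hPm : Measurable (Prod.map (fun y : ℝ => y * x 0)
          (fun u : Fin n → ℝ => ∑ j, u j * x (Fin.succ j))) :=
        (measurable_mul_const _).prodMap
          (Finset.measurable_sum _ fun j _ => (measurable_pi_apply j).mul_const _)
      rw [hfe, ← Measure.map_map measurable_add hPm]
      have hprodmap : Measure.map
            (Prod.map (fun y : ℝ => y * x 0) (fun u : Fin n → ℝ => ∑ j, u j * x (Fin.succ j)))
            ((gaussianReal (w 0) 1).prod
              (Measure.pi fun j : Fin n => gaussianReal (w ((0 : Fin (n + 1)).succAbove j)) 1))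
          = (gaussianReal (x 0 * w 0) (⟨x 0 ^ 2, sq_nonneg _⟩ * 1)).prod
              (gaussianReal (∑ j : Fin n, w (Fin.succ j) * x (Fin.succ j))
                (∑ j : Fin n, Real.nnabs (x (Fin.succ j)) ^ 2)) := by
        rw [← Measure.map_prod_map _ _ (measurable_mul_const _)
          (Finset.measurable_sum _ fun j _ => (measurable_pi_apply j).mul_const _)]
        congr 1
        · exact gaussianReal_map_mul_const (x 0)
        · simp_rw [Fin.zero_succAbove]
          exact ih (fun j => x (Fin.succ j)) (fun j => w (Fin.succ j))
      rw [hprodmap, gaussianReal_conv]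
      congr 1
      · rw [Fin.sum_univ_succ, mul_comm]
      · rw [Fin.sum_univ_succ]
        congr 1
        ext
        simp [sq_abs]
        exact mul_one (x 0 ^ 2)

lemma sgn_vals (a : ℝ) : sgn a = 1 ∨ sgn a = -1 := by
  unfold sgn; by_cases h : 0 < a <;> simp [h]

lemma norm_sgn_le (a : ℝ) : ‖sgn a‖ ≤ 1 := by
  unfold sgn; by_cases h : 0 < a <;> simp [h]

lemma integral_sgn_lin (n : ℕ) (hn : 1 ≤ n) (w s : Fin n → ℝ)
    (hs : ∀ i, s i = 1 ∨ s i = -1) :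
    ∫ v, sgn (∑ i, v i * s i) ∂(Measure.pi fun i => gaussianReal (w i) 1)
      = Erf ((∑ i, w i * s i) / Real.sqrt (2 * n)) := by
  have hφ : Measurable (fun v : Fin n → ℝ => ∑ i, v i * s i) :=
    Finset.measurable_sum _ fun i _ => (measurable_pi_apply i).mul_const _
  have h1 : ∫ v, sgn (∑ i, v i * s i) ∂(Measure.pi fun i => gaussianReal (w i) 1)
      = ∫ y, sgn y ∂(Measure.map (fun v : Fin n → ℝ => ∑ i, v i * s i)
          (Measure.pi fun i => gaussianReal (w i) 1)) :=
    (integral_map hφ.aemeasurable (measurable_sgn.aestronglyMeasurable)).symm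
  rw [h1, map_lin n s w]
  have hvar : (∑ i, Real.nnabs (s i) ^ 2) = (n : ℝ≥0) := by
    have : ∀ i : Fin n, Real.nnabs (s i) ^ 2 = 1 := by
      intro i
      rcases hs i with h | h <;> rw [h] <;> ext <;> norm_num
    rw [Finset.sum_congr rfl fun i _ => this i]
    simp
  rw [hvar, integral_sgn _ _ (by exact_mod_cast Nat.one_le_iff_ne_zero.mp hn)]
  congr 1
  rw [← Real.sqrt_mul (by norm_num : (0:ℝ) ≤ 2)]
  norm_num

lemma sum_sq_pos {n : ℕ} (x : Fin n → ℝ) (hx : x ≠ 0) : 0 < ∑ j, x j ^ 2 := by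
  have : ∃ j, x j ≠ 0 := by
    by_contra h
    push_neg at h
    exact hx (funext h)
  obtain ⟨j, hj⟩ := this
  have h1 : 0 < x j ^ 2 := by positivity
  exact Finset.sum_pos' (fun i _ => sq_nonneg _) ⟨j, Finset.mem_univ j, h1⟩

lemma integral_if_row (n : ℕ) (x : Fin n → ℝ) (hx : x ≠ 0) (w : Fin n → ℝ) (s : ℝ)
    (hs : s = 1 ∨ s = -1) :
    ∫ r, (if sgn (∑ j, r j * x j) = s then (1:ℝ) else 0)
        ∂(Measure.pi fun j => gaussianReal (w j) 1)
      = 1 / 2 + s / 2 * Erf ((∑ j, w j * x j) /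
          (Real.sqrt 2 * Real.sqrt (∑ j, x j ^ 2))) := by
  have hφ : Measurable (fun r : Fin n → ℝ => ∑ j, r j * x j) :=
    Finset.measurable_sum _ fun j _ => (measurable_pi_apply j).mul_const _
  have hg : Measurable (fun y : ℝ => if sgn y = s then (1:ℝ) else 0) :=
    Measurable.ite (measurable_sgn (measurableSet_singleton s)) measurable_const measurable_const
  have h1 : ∫ r, (if sgn (∑ j, r j * x j) = s then (1:ℝ) else 0)
        ∂(Measure.pi fun j => gaussianReal (w j) 1)
      = ∫ y, (if sgn y = s then (1:ℝ) else 0) ∂(Measure.map (fun r : Fin n → ℝ => ∑ j, r j * x j)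
          (Measure.pi fun j => gaussianReal (w j) 1)) :=
    (integral_map hφ.aemeasurable hg.aestronglyMeasurable).symm
  rw [h1, map_lin n x w]
  have hvpos : (0:ℝ) < ∑ j, x j ^ 2 := sum_sq_pos x hx
  have hcoe : ((∑ j, Real.nnabs (x j) ^ 2 : ℝ≥0) : ℝ) = ∑ j, x j ^ 2 := by
    push_cast
    exact Finset.sum_congr rfl fun j _ => by simp [sq_abs]
  have hvne : (∑ j, Real.nnabs (x j) ^ 2) ≠ 0 := by
    intro h
    rw [← hcoe] at hvpos
    rw [h] at hvpos
    simp at hvpos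
  rw [integral_if_sgn _ _ hvne s hs, hcoe]

lemma integral_pi_prod {n : ℕ} {E : Fin n → Type*} [∀ i, MeasurableSpace (E i)]
    (μ : ∀ i, Measure (E i)) [∀ i, IsProbabilityMeasure (μ i)] (f : ∀ i, E i → ℝ) :
    ∫ v, ∏ i, f i (v i) ∂Measure.pi μ = ∏ i, ∫ y, f i y ∂μ i := by
  induction n with
  | zero =>
      simp only [Finset.univ_eq_empty, Finset.prod_empty, integral_const, measure_univ,
        ENNReal.toReal_one, smul_eq_mul, mul_one, one_smul, probReal_univ]
  | succ n ih =>
      calc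
        ∫ v, ∏ i, f i (v i) ∂Measure.pi μ
            = ∫ p : E 0 × ((i : Fin n) → E (Fin.succ i)),
                f 0 p.1 * ∏ i : Fin n, f (Fin.succ i) (p.2 i)
                ∂((μ 0).prod (Measure.pi fun i : Fin n => μ (Fin.succ i))) := by
              rw [← ((measurePreserving_piFinSuccAbove μ 0).symm).integral_comp']
              congr 1
              funext p
              simp only [MeasurableEquiv.piFinSuccAbove_symm_apply, Fin.insertNthEquiv,
                Equiv.coe_fn_mk, Fin.insertNth_zero]
              rw [Fin.prod_univ_succ]
              simp [Fin.cons_zero, Fin.cons_succ]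
              exact Or.inl (Finset.prod_congr rfl fun i _ => rfl)
        _ = (∫ y, f 0 y ∂μ 0) * ∏ i : Fin n, ∫ y, f (Fin.succ i) y ∂μ (Fin.succ i) := by
              rw [integral_prod_mul (μ := μ 0)
                (ν := Measure.pi fun i : Fin n => μ (Fin.succ i)) (f 0)
                (fun u => ∏ i : Fin n, f (Fin.succ i) (u i)), ih]
        _ = ∏ i, ∫ y, f i y ∂μ i := by rw [Fin.prod_univ_succ]


/-- Expectation of the one-hidden-layer sign network
`f_{(V₁,v₂)}(x) = sgn(v₂ ⬝ sgn(V₁ x))` under independent Gaussians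
`V₁ ~ N(W₁, I)`, `v₂ ~ N(w₂, I)`. -/
theorem statement13 (d₀ d₁ : ℕ) (hd₀ : 1 ≤ d₀) (hd₁ : 1 ≤ d₁)
    (x : Fin d₀ → ℝ) (hx : x ≠ 0)
    (W₁ : Fin d₁ → Fin d₀ → ℝ) (w₂ : Fin d₁ → ℝ) :
    ∫ Vv : (Fin d₁ → Fin d₀ → ℝ) × (Fin d₁ → ℝ),
        sgn (∑ i, Vv.2 i * sgn (∑ j, Vv.1 i j * x j))
      ∂(Measure.prod
          (Measure.pi fun i => Measure.pi fun j => gaussianReal (W₁ i j) 1)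
          (Measure.pi fun i => gaussianReal (w₂ i) 1))
      = ∑ s ∈ Fintype.piFinset (fun _ : Fin d₁ => ({-1, 1} : Finset ℝ)),
          Erf ((∑ i, w₂ i * s i) / Real.sqrt (2 * d₁)) *
            ∏ i, (1 / 2 + s i / 2 *
              Erf ((∑ j, W₁ i j * x j) /
                (Real.sqrt 2 * Real.sqrt (∑ j, x j ^ 2)))) := by
  classical
  set P₁ : Measure (Fin d₁ → Fin d₀ → ℝ) :=
    Measure.pi fun i => Measure.pi fun j => gaussianReal (W₁ i j) 1 with hP₁
  set P₂ : Measure (Fin d₁ → ℝ) := Measure.pi fun i => gaussianReal (w₂ i) 1 with hP₂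
  have hmeas : Measurable (fun Vv : (Fin d₁ → Fin d₀ → ℝ) × (Fin d₁ → ℝ) =>
      sgn (∑ i, Vv.2 i * sgn (∑ j, Vv.1 i j * x j))) := by
    apply measurable_sgn.comp
    apply Finset.measurable_sum
    intro i _
    exact ((measurable_pi_apply i).comp measurable_snd).mul
      (measurable_sgn.comp (Finset.measurable_sum _ fun j _ =>
        ((measurable_pi_apply j).comp ((measurable_pi_apply i).comp measurable_fst)).mul_const _))
  have hint : Integrable (fun Vv : (Fin d₁ → Fin d₀ → ℝ) × (Fin d₁ → ℝ) =>
      sgn (∑ i, Vv.2 i * sgn (∑ j, Vv.1 i j * x j))) (P₁.prod P₂) :=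
    (integrable_const (1:ℝ)).mono' hmeas.aestronglyMeasurable
      (Filter.Eventually.of_forall fun Vv => norm_sgn_le _)
  rw [MeasureTheory.integral_prod _ hint]
  have hinner : ∀ V : Fin d₁ → Fin d₀ → ℝ,
      ∫ v₂, sgn (∑ i, v₂ i * sgn (∑ j, V i j * x j)) ∂P₂
        = Erf ((∑ i, w₂ i * sgn (∑ j, V i j * x j)) / Real.sqrt (2 * d₁)) :=
    fun V => integral_sgn_lin d₁ hd₁ w₂ _ (fun i => sgn_vals _)
  simp_rw [hinner]
  have hexp : ∀ V : Fin d₁ → Fin d₀ → ℝ,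
      Erf ((∑ i, w₂ i * sgn (∑ j, V i j * x j)) / Real.sqrt (2 * d₁))
        = ∑ s ∈ Fintype.piFinset (fun _ : Fin d₁ => ({-1, 1} : Finset ℝ)),
            Erf ((∑ i, w₂ i * s i) / Real.sqrt (2 * d₁)) *
              ∏ i, (if sgn (∑ j, V i j * x j) = s i then (1:ℝ) else 0) := by
    intro V
    set σ : Fin d₁ → ℝ := fun i => sgn (∑ j, V i j * x j) with hσdef
    have hσ : σ ∈ Fintype.piFinset (fun _ : Fin d₁ => ({-1, 1} : Finset ℝ)) := by
      rw [Fintype.mem_piFinset]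
      intro i
      rcases sgn_vals (∑ j, V i j * x j) with h | h <;> simp [hσdef, h]
    symm
    rw [Finset.sum_eq_single_of_mem σ hσ]
    · simp [hσdef]
    · intro s hsmem hne
      have : ∃ i, σ i ≠ s i := by
        by_contra h
        push_neg at h
        exact hne (funext fun i => (h i).symm)
      obtain ⟨i, hi⟩ := this
      rw [Finset.prod_eq_zero (Finset.mem_univ i) (by simpa [hσdef] using hi), mul_zero]
  simp_rw [hexp]
  have hintrow : ∀ (s : Fin d₁ → ℝ),
      Integrable (fun V : Fin d₁ → Fin d₀ → ℝ =>
        Erf ((∑ i, w₂ i * s i) / Real.sqrt (2 * d₁)) *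
          ∏ i, (if sgn (∑ j, V i j * x j) = s i then (1:ℝ) else 0)) P₁ := by
    intro s
    have hm : Measurable (fun V : Fin d₁ → Fin d₀ → ℝ =>
        ∏ i, (if sgn (∑ j, V i j * x j) = s i then (1:ℝ) else 0)) := by
      apply Finset.measurable_prod
      intro i _
      apply Measurable.ite _ measurable_const measurable_const
      exact (measurable_sgn.comp (Finset.measurable_sum _ fun j _ =>
        ((measurable_pi_apply j).comp (measurable_pi_apply i)).mul_const _))
        (measurableSet_singleton (s i))
    apply Integrable.const_mul
    refine (integrable_const (1:ℝ)).mono' hm.aestronglyMeasurable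
      (Filter.Eventually.of_forall fun V => ?_)
    rw [Real.norm_eq_abs, abs_of_nonneg (Finset.prod_nonneg fun i _ => by positivity)]
    apply Finset.prod_le_one (fun i _ => by positivity)
    intro i _
    split <;> norm_num
  rw [integral_finset_sum _ fun s _ => hintrow s]
  refine Finset.sum_congr rfl fun s hsmem => ?_
  rw [integral_const_mul]
  congr 1
  have := integral_pi_prod (fun i : Fin d₁ => Measure.pi fun j => gaussianReal (W₁ i j) 1)
    (fun i (r : Fin d₀ → ℝ) => if sgn (∑ j, r j * x j) = s i then (1:ℝ) else 0)
  rw [hP₁, this]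
  refine Finset.prod_congr rfl fun i _ => ?_
  apply integral_if_row d₀ x hx (W₁ i) (s i)
  have := (Fintype.mem_piFinset.mp hsmem) i
  simp only [Finset.mem_insert, Finset.mem_singleton] at this
  tauto
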